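/- arXiv:1907.11874 — 2 statements merged into one kernel-verified Lean document; each statement's English description precedes it below -/
import Mathlib

section
/- Equality E(G) = 2√m holds if and only if G is a complete bipartite graph together with (possibly zero) isolated vertices. -/
open SimpleGraph Finset

/-- Adjacency matrix over `ℝ` (classical decidability). -/
noncomputable def adjMatR {n : ℕ} (G : SimpleGraph (Fin n)) : Matrix (Fin n) (Fin n) ℝ :=
  @SimpleGraph.adjMatrix ℝ (Fin n) G (Classical.decRel _) _ _

lemma adjMatR_isHermitian {n : ℕ} (G : SimpleGraph (Fin n)) : (adjMatR G).IsHermitian := by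
  have h : (adjMatR G).IsSymm := @SimpleGraph.isSymm_adjMatrix ℝ (Fin n) G (Classical.decRel _) _ _
  simpa [Matrix.IsHermitian, Matrix.conjTranspose_eq_transpose_of_trivial, Matrix.IsSymm] using h

/-- Multiset of adjacency eigenvalues (with multiplicity). -/
noncomputable def specMS {n : ℕ} (G : SimpleGraph (Fin n)) : Multiset ℝ :=
  Finset.univ.val.map (adjMatR_isHermitian G).eigenvalues

/-- `i`-th largest adjacency eigenvalue (0-indexed). -/
noncomputable def eigval {n : ℕ} (G : SimpleGraph (Fin n)) (i : ℕ) : ℝ :=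
  ((specMS G).sort (· ≥ ·)).getD i 0

/-- Graph energy. -/
noncomputable def energy {n : ℕ} (G : SimpleGraph (Fin n)) : ℝ :=
  ((specMS G).map (fun x => |x|)).sum

/-- ℓ¹ spectral distance. -/
noncomputable def specDist {n : ℕ} (G H : SimpleGraph (Fin n)) : ℝ :=
  ∑ i ∈ Finset.range n, |eigval G i - eigval H i|

/-- number of edges -/
noncomputable def numEdges {n : ℕ} (G : SimpleGraph (Fin n)) : ℕ := G.edgeSet.ncard

/-- `K_2 + (n-2)K_1`: one edge plus isolated vertices. -/
def oneEdgeG (n : ℕ) : SimpleGraph (Fin n) :=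
  SimpleGraph.fromRel (fun u v => (u : ℕ) = 0 ∧ (v : ℕ) = 1)

/-- `P_3 + (n-3)K_1`: a path on 3 vertices plus isolated vertices. -/
def path3G (n : ℕ) : SimpleGraph (Fin n) :=
  SimpleGraph.fromRel (fun u v => ((u : ℕ) = 0 ∧ (v : ℕ) = 1) ∨ ((u : ℕ) = 1 ∧ (v : ℕ) = 2))

/-- Complete bipartite graph `K_{a,b}` on `Fin (a+b)`. -/
def compBip (a b : ℕ) : SimpleGraph (Fin (a + b)) :=
  SimpleGraph.fromRel (fun u v => (u : ℕ) < a ∧ a ≤ (v : ℕ))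

/-- `K_{r,s} + tK_1`: complete bipartite plus `t` isolated vertices. -/
def compBipPlus (r s t : ℕ) : SimpleGraph (Fin (r + s + t)) :=
  SimpleGraph.fromRel (fun u v => (u : ℕ) < r ∧ r ≤ (v : ℕ) ∧ (v : ℕ) < r + s)

/-- `K_1 + K_{n-1}`: an isolated vertex plus a complete graph. -/
def k1PlusComplete (n : ℕ) : SimpleGraph (Fin n) :=
  SimpleGraph.fromRel (fun u v => (u : ℕ) ≠ 0 ∧ (v : ℕ) ≠ 0)

/-- `(K_1 + K_2) ∇ (n-3)K_1`: join of `K_1 + K_2` with `n-3` isolated vertices. -/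
def k1k2JoinEmpty (n : ℕ) : SimpleGraph (Fin n) :=
  SimpleGraph.fromRel (fun u v =>
    ((u : ℕ) = 1 ∧ (v : ℕ) = 2) ∨ ((u : ℕ) < 3 ∧ 3 ≤ (v : ℕ)))

section RealAux

variable {N : Type*} [Fintype N] [DecidableEq N]

private lemma sq_sum_split (f : N → ℝ) :
    (∑ i, f i)^2 = ∑ i, (f i)^2 + ∑ p ∈ (Finset.univ : Finset N).offDiag, f p.1 * f p.2 := by
  have h1 : (∑ i, f i)^2 = ∑ p ∈ (Finset.univ : Finset N) ×ˢ Finset.univ, f p.1 * f p.2 := by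
    rw [sq, Finset.sum_mul_sum, ← Finset.sum_product']
  rw [h1, ← Finset.diag_union_offDiag (Finset.univ : Finset N),
    Finset.sum_union (Finset.disjoint_diag_offDiag _), Finset.sum_diag]
  simp [sq]

private lemma sq_sum_ge (f : N → ℝ) (hf : ∀ i, 0 ≤ f i) :
    ∑ i, (f i)^2 ≤ (∑ i, f i)^2 := by
  rw [sq_sum_split f]
  have h : 0 ≤ ∑ p ∈ (Finset.univ : Finset N).offDiag, f p.1 * f p.2 :=
    Finset.sum_nonneg fun p _ => mul_nonneg (hf _) (hf _)
  linarith

private lemma sq_sum_eq_iff (f : N → ℝ) (hf : ∀ i, 0 ≤ f i) :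
    (∑ i, f i)^2 = ∑ i, (f i)^2 ↔ ∀ i j, i ≠ j → f i * f j = 0 := by
  rw [sq_sum_split f]
  constructor
  · intro h i j hij
    have hz : ∑ p ∈ (Finset.univ : Finset N).offDiag, f p.1 * f p.2 = 0 := by linarith
    exact (Finset.sum_eq_zero_iff_of_nonneg (fun p _ => mul_nonneg (hf _) (hf _))).1 hz (i, j)
      (Finset.mem_offDiag.2 ⟨Finset.mem_univ _, Finset.mem_univ _, hij⟩)
  · intro h
    have hz : ∑ p ∈ (Finset.univ : Finset N).offDiag, f p.1 * f p.2 = 0 :=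
      Finset.sum_eq_zero fun p hp => h _ _ (Finset.mem_offDiag.1 hp).2.2
    rw [hz, add_zero]

private lemma abs_eigen_split (μ : N → ℝ) (h0 : ∑ i, μ i = 0) :
    (2 * ∑ i, (μ i)^2 ≤ (∑ i, |μ i|)^2) ∧
    ((∑ i, |μ i|)^2 = 2 * ∑ i, (μ i)^2 ↔
      (∀ i j, 0 < μ i → 0 < μ j → i = j) ∧ (∀ i j, μ i < 0 → μ j < 0 → i = j)) := by
  classical
  set p : N → ℝ := fun i => max (μ i) 0 with hp
  set q : N → ℝ := fun i => max (-μ i) 0 with hq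
  have hpn : ∀ i, 0 ≤ p i := fun i => le_max_right _ _
  have hqn : ∀ i, 0 ≤ q i := fun i => le_max_right _ _
  have habs : ∀ i, |μ i| = p i + q i := by
    intro i
    rcases le_total 0 (μ i) with h | h
    · rw [abs_of_nonneg h]
      simp only [hp, hq, max_eq_left h, max_eq_right (neg_nonpos_of_nonneg h), add_zero]
    · rw [abs_of_nonpos h]
      simp only [hp, hq, max_eq_right h, max_eq_left (neg_nonneg.mpr h), zero_add]
  have hdiff : ∀ i, μ i = p i - q i := by
    intro i
    rcases le_total 0 (μ i) with h | h
    · simp only [hp, hq, max_eq_left h, max_eq_right (neg_nonpos_of_nonneg h), sub_zero]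
    · simp only [hp, hq, max_eq_right h, max_eq_left (neg_nonneg.mpr h), zero_sub, neg_neg]
  have hsqs : ∀ i, (μ i)^2 = (p i)^2 + (q i)^2 := by
    intro i
    rcases le_total 0 (μ i) with h | h
    · simp only [hp, hq, max_eq_left h, max_eq_right (neg_nonpos_of_nonneg h)]; ring
    · simp only [hp, hq, max_eq_right h, max_eq_left (neg_nonneg.mpr h)]; ring
  have hsums : ∑ i, p i = ∑ i, q i := by
    have h1 : ∑ i, (p i - q i) = 0 := by
      rw [Finset.sum_congr rfl fun i _ => (hdiff i).symm]; exact h0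
    rw [Finset.sum_sub_distrib] at h1; linarith
  have hEabs : ∑ i, |μ i| = (∑ i, p i) + ∑ i, q i := by
    rw [← Finset.sum_add_distrib]; exact Finset.sum_congr rfl fun i _ => habs i
  have hSq : ∑ i, (μ i)^2 = (∑ i, (p i)^2) + ∑ i, (q i)^2 := by
    rw [← Finset.sum_add_distrib]; exact Finset.sum_congr rfl fun i _ => hsqs i
  have hkey : (∑ i, |μ i|)^2 = 2 * (∑ i, p i)^2 + 2 * (∑ i, q i)^2 := by
    rw [hEabs, hsums]; ring
  have hip := sq_sum_ge p hpn
  have hiq := sq_sum_ge q hqn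
  have hposp : ∀ i, 0 < p i ↔ 0 < μ i := by
    intro i; simp only [hp]; constructor
    · intro h; by_contra hc; push_neg at hc; rw [max_eq_right hc] at h; exact lt_irrefl _ h
    · intro h; rwa [max_eq_left h.le]
  have hposq : ∀ i, 0 < q i ↔ μ i < 0 := by
    intro i; simp only [hq]; constructor
    · intro h; by_contra hc; push_neg at hc
      rw [max_eq_right (neg_nonpos_of_nonneg hc)] at h; exact lt_irrefl _ h
    · intro h; rw [max_eq_left (neg_nonneg.mpr h.le)]; linarith
  constructor
  · rw [hkey, hSq]; linarith
  · rw [hkey, hSq]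
    constructor
    · intro h
      have h1 : (∑ i, p i)^2 = ∑ i, (p i)^2 := by linarith
      have h2 : (∑ i, q i)^2 = ∑ i, (q i)^2 := by linarith
      have c1 := (sq_sum_eq_iff p hpn).1 h1
      have c2 := (sq_sum_eq_iff q hqn).1 h2
      constructor
      · intro i j hi hj
        by_contra hij
        have hz := c1 i j hij
        have : 0 < p i * p j := mul_pos ((hposp i).2 hi) ((hposp j).2 hj)
        rw [hz] at this; exact lt_irrefl _ this
      · intro i j hi hj
        by_contra hij
        have hz := c2 i j hij
        have : 0 < q i * q j := mul_pos ((hposq i).2 hi) ((hposq j).2 hj)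
        rw [hz] at this; exact lt_irrefl _ this
    · rintro ⟨c1, c2⟩
      have h1 : (∑ i, p i)^2 = ∑ i, (p i)^2 := by
        refine (sq_sum_eq_iff p hpn).2 fun i j hij => ?_
        rcases le_or_gt (p i) 0 with h | h
        · rw [le_antisymm h (hpn i), zero_mul]
        · rcases le_or_gt (p j) 0 with h' | h'
          · rw [le_antisymm h' (hpn j), mul_zero]
          · exact absurd (c1 i j ((hposp i).1 h) ((hposp j).1 h')) hij
      have h2 : (∑ i, q i)^2 = ∑ i, (q i)^2 := by
        refine (sq_sum_eq_iff q hqn).2 fun i j hij => ?_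
        rcases le_or_gt (q i) 0 with h | h
        · rw [le_antisymm h (hqn i), zero_mul]
        · rcases le_or_gt (q j) 0 with h' | h'
          · rw [le_antisymm h' (hqn j), mul_zero]
          · exact absurd (c2 i j ((hposq i).1 h) ((hposq j).1 h')) hij
      rw [h1, h2]; ring

private lemma conds_card (μ : N → ℝ) (h0 : ∑ i, μ i = 0) :
    ((∀ i j, 0 < μ i → 0 < μ j → i = j) ∧ (∀ i j, μ i < 0 → μ j < 0 → i = j)) ↔
      Fintype.card {i // μ i ≠ 0} ≤ 2 := by
  classical
  constructor
  · rintro ⟨c1, c2⟩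
    have hinj : Function.Injective (fun i : {i // μ i ≠ 0} => decide (0 < μ i.1)) := by
      rintro ⟨i, hi⟩ ⟨j, hj⟩ h
      simp only [decide_eq_decide] at h
      rcases hi.lt_or_gt with hi' | hi'
      · have hj' : μ j < 0 := by
          rcases hj.lt_or_gt with h' | h'
          · exact h'
          · exact absurd (h.2 h') (by linarith)
        exact Subtype.ext (c2 i j hi' hj')
      · have hj' : 0 < μ j := h.1 hi'
        exact Subtype.ext (c1 i j hi' hj')
    calc Fintype.card {i // μ i ≠ 0} ≤ Fintype.card Bool := Fintype.card_le_of_injective _ hinj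
      _ = 2 := Fintype.card_bool
  · intro hcard
    have key : ∀ (ν : N → ℝ), ∑ i, ν i = 0 → Fintype.card {i // ν i ≠ 0} ≤ 2 →
        ∀ i j, 0 < ν i → 0 < ν j → i = j := by
      intro ν hsum hc i j hi hj
      by_contra hij
      have hneg : ∃ k, ν k < 0 := by
        by_contra hk
        push_neg at hk
        have h1 : ν i ≤ ∑ l, ν l := Finset.single_le_sum (fun l _ => hk l) (Finset.mem_univ i)
        rw [hsum] at h1; linarith
      obtain ⟨k, hk⟩ := hneg
      have hik : i ≠ k := fun h => by rw [h] at hi; linarith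
      have hjk : j ≠ k := fun h => by rw [h] at hj; linarith
      have h3 : ({⟨i, hi.ne'⟩, ⟨j, hj.ne'⟩, ⟨k, hk.ne⟩} : Finset {l // ν l ≠ 0}).card = 3 := by
        rw [Finset.card_insert_of_notMem, Finset.card_insert_of_notMem,
          Finset.card_singleton]
        · simp only [Finset.mem_singleton]
          exact fun h => hjk (congrArg Subtype.val h)
        · simp only [Finset.mem_insert, Finset.mem_singleton]
          rintro (h | h)
          · exact hij (congrArg Subtype.val h)
          · exact hik (congrArg Subtype.val h)
      have h4 := Finset.card_le_univ ({⟨i, hi.ne'⟩, ⟨j, hj.ne'⟩, ⟨k, hk.ne⟩} :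
        Finset {l // ν l ≠ 0})
      rw [h3] at h4
      omega
    refine ⟨key μ h0 hcard, ?_⟩
    intro i j hi hj
    have hsum' : ∑ i, (fun l => -μ l) i = 0 := by
      simp only [Finset.sum_neg_distrib]
      rw [h0, neg_zero]
    have hcard' : Fintype.card {i // (fun l => -μ l) i ≠ 0} ≤ 2 := by
      refine le_trans (le_of_eq (Fintype.card_congr
        (Equiv.subtypeEquivRight fun x => ?_))) hcard
      simp [neg_ne_zero]
    exact key _ hsum' hcard' i j (by simpa using hi) (by simpa using hj)

end RealAux
section SpectralAux
open Matrix

variable {N : Type*} [Fintype N] [DecidableEq N]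

private lemma conj_trace_aux (U D A : Matrix N N ℝ) (hU : star U * U = 1)
    (hspec : A = U * D * star U) : A.trace = D.trace ∧ (A * A).trace = (D * D).trace := by
  constructor
  · rw [hspec, trace_mul_cycle, hU, Matrix.one_mul]
  · have hmid : star U * (U * (D * star U)) = D * star U := by
      rw [← Matrix.mul_assoc, hU, Matrix.one_mul]
    have hAA : A * A = U * (D * D) * star U := by
      rw [hspec]
      simp only [Matrix.mul_assoc, hmid]
    rw [hAA, trace_mul_cycle, hU, Matrix.one_mul]

private lemma conj_trace_eq {A : Matrix N N ℝ} (hA : A.IsHermitian) :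
    A.trace = ∑ i, hA.eigenvalues i ∧ (A * A).trace = ∑ i, (hA.eigenvalues i)^2 := by
  obtain ⟨h1, h2⟩ := conj_trace_aux (hA.eigenvectorUnitary : Matrix N N ℝ)
    (diagonal (RCLike.ofReal ∘ hA.eigenvalues)) A
    (mem_unitaryGroup_iff'.mp hA.eigenvectorUnitary.2) hA.spectral_theorem
  constructor
  · rw [h1, trace_diagonal]; simp
  · rw [h2, diagonal_mul_diagonal, trace_diagonal]; simp [sq]

end SpectralAux

section GraphAux
open Matrix

variable {n : ℕ}

private lemma adjMatR_of_adj {G : SimpleGraph (Fin n)} {u v : Fin n} (h : G.Adj u v) :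
    adjMatR G u v = 1 := by
  unfold adjMatR
  rw [SimpleGraph.adjMatrix_apply, if_pos h]

private lemma adjMatR_of_not_adj {G : SimpleGraph (Fin n)} {u v : Fin n} (h : ¬ G.Adj u v) :
    adjMatR G u v = 0 := by
  unfold adjMatR
  rw [SimpleGraph.adjMatrix_apply, if_neg h]

private lemma adjMatR_adj_of_eq_one {G : SimpleGraph (Fin n)} {u v : Fin n}
    (h : adjMatR G u v = 1) : G.Adj u v := by
  by_contra hc
  rw [adjMatR_of_not_adj hc] at h
  norm_num at h

private lemma adjMatR_zero_or_one (G : SimpleGraph (Fin n)) (u v : Fin n) :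
    adjMatR G u v = 0 ∨ adjMatR G u v = 1 := by
  by_cases h : G.Adj u v
  · exact Or.inr (adjMatR_of_adj h)
  · exact Or.inl (adjMatR_of_not_adj h)

private lemma adjMatR_symm (G : SimpleGraph (Fin n)) (u v : Fin n) :
    adjMatR G u v = adjMatR G v u := by
  by_cases h : G.Adj u v
  · rw [adjMatR_of_adj h, adjMatR_of_adj h.symm]
  · rw [adjMatR_of_not_adj h, adjMatR_of_not_adj fun hc => h hc.symm]

private lemma adjMatR_trace (G : SimpleGraph (Fin n)) : (adjMatR G).trace = 0 := by
  simp [adjMatR]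

private lemma adjMatR_trace_sq (G : SimpleGraph (Fin n)) :
    (adjMatR G * adjMatR G).trace = 2 * (numEdges G : ℝ) := by
  classical
  letI : DecidableRel G.Adj := Classical.decRel _
  have h1 : ∀ i, (adjMatR G * adjMatR G) i i = (G.degree i : ℝ) := by
    unfold adjMatR
    intro i
    exact SimpleGraph.adjMatrix_mul_self_apply_self (α := ℝ) G i
  have h2 : ∑ v, G.degree v = 2 * G.edgeFinset.card := G.sum_degrees_eq_twice_card_edges
  have h3 : numEdges G = G.edgeFinset.card := by
    rw [numEdges, ← Set.ncard_coe_finset, SimpleGraph.coe_edgeFinset]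
  have h4 : (adjMatR G * adjMatR G).trace = ∑ i, (G.degree i : ℝ) := by
    simp only [Matrix.trace, Matrix.diag]
    exact Finset.sum_congr rfl fun i _ => h1 i
  rw [h4, h3]
  push_cast [← h2]
  norm_cast

private lemma energy_eq_sum (G : SimpleGraph (Fin n)) :
    energy G = ∑ i, |(adjMatR_isHermitian G).eigenvalues i| := by
  rw [energy, specMS, Multiset.map_map]
  rfl

private lemma energy_iff_rank (G : SimpleGraph (Fin n)) :
    energy G = 2 * Real.sqrt (numEdges G) ↔ (adjMatR G).rank ≤ 2 := by
  classical
  obtain ⟨htr, htr2⟩ := conj_trace_eq (adjMatR_isHermitian G)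
  set μ := (adjMatR_isHermitian G).eigenvalues with hμ
  have h0 : ∑ i, μ i = 0 := by rw [← htr, adjMatR_trace]
  have h2 : ∑ i, (μ i)^2 = 2 * (numEdges G : ℝ) := by rw [← htr2, adjMatR_trace_sq]
  have hE : energy G = ∑ i, |μ i| := energy_eq_sum G
  have hEnn : 0 ≤ energy G := by
    rw [hE]; exact Finset.sum_nonneg fun i _ => abs_nonneg _
  obtain ⟨hineq, hiff⟩ := abs_eigen_split μ h0
  have hm0 : (0:ℝ) ≤ (numEdges G : ℝ) := Nat.cast_nonneg _
  have hrankcard : (adjMatR G).rank = Fintype.card {i // μ i ≠ 0} :=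
    (adjMatR_isHermitian G).rank_eq_card_non_zero_eigs
  constructor
  · intro h
    have hsq : (∑ i, |μ i|)^2 = 2 * ∑ i, (μ i)^2 := by
      rw [← hE, h, h2, mul_pow, Real.sq_sqrt hm0]; ring
    have hconds := hiff.1 hsq
    rw [hrankcard]
    exact (conds_card μ h0).1 hconds
  · intro h
    rw [hrankcard] at h
    have hconds := (conds_card μ h0).2 h
    have hsq : (∑ i, |μ i|)^2 = 2 * ∑ i, (μ i)^2 := hiff.2 hconds
    have hEq : (energy G)^2 = (2 * Real.sqrt (numEdges G))^2 := by
      rw [hE, hsq, h2, mul_pow, Real.sq_sqrt hm0]; ring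
    have h2nn : 0 ≤ 2 * Real.sqrt (numEdges G) := by positivity
    calc energy G = Real.sqrt ((energy G)^2) := (Real.sqrt_sq hEnn).symm
      _ = Real.sqrt ((2 * Real.sqrt (numEdges G))^2) := by rw [hEq]
      _ = 2 * Real.sqrt (numEdges G) := Real.sqrt_sq h2nn

end GraphAux
section RankAux
open Matrix

variable {N : Type*} [Fintype N] [DecidableEq N]

private lemma mulVec_eq_sum_cols (A : Matrix N N ℝ) (x : N → ℝ) :
    A.mulVec x = ∑ v, x v • (fun w => A w v) := by
  funext w
  rw [Matrix.mulVec, dotProduct, Finset.sum_apply]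
  exact Finset.sum_congr rfl fun v _ => by
    simp only [Pi.smul_apply, smul_eq_mul]; ring

private lemma rank_le_two_of_span {A : Matrix N N ℝ} (v1 v2 : N → ℝ)
    (h : ∀ x, (fun w => A w x) ∈ Submodule.span ℝ ({v1, v2} : Set (N → ℝ))) :
    A.rank ≤ 2 := by
  classical
  have hle : LinearMap.range A.mulVecLin ≤ Submodule.span ℝ ({v1, v2} : Set (N → ℝ)) := by
    rintro y ⟨x, rfl⟩
    rw [Matrix.mulVecLin_apply, mulVec_eq_sum_cols]
    exact Submodule.sum_mem _ fun v _ => Submodule.smul_mem _ _ (h v)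
  have h1 : A.rank = Module.finrank ℝ (LinearMap.range A.mulVecLin) := rfl
  have h2 : ({v1, v2} : Set (N → ℝ)) = (({v1, v2} : Finset (N → ℝ)) : Set (N → ℝ)) := by
    simp
  rw [h1]
  calc Module.finrank ℝ (LinearMap.range A.mulVecLin)
      ≤ Module.finrank ℝ (Submodule.span ℝ ({v1, v2} : Set (N → ℝ))) :=
        Submodule.finrank_mono hle
    _ ≤ ({v1, v2} : Finset (N → ℝ)).card := by
        rw [h2]; exact finrank_span_finset_le_card _
    _ ≤ 2 := le_trans (Finset.card_insert_le _ _) (by simp)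

end RankAux

section CompBip

private lemma compBipPlus_adj (r s t : ℕ) (u v : Fin (r + s + t)) :
    (compBipPlus r s t).Adj u v ↔
      (((u:ℕ) < r ∧ r ≤ (v:ℕ) ∧ (v:ℕ) < r + s) ∨
       ((v:ℕ) < r ∧ r ≤ (u:ℕ) ∧ (u:ℕ) < r + s)) := by
  rw [compBipPlus, SimpleGraph.fromRel_adj]
  constructor
  · rintro ⟨-, h⟩; exact h
  · intro h
    refine ⟨?_, h⟩
    rintro rfl
    rcases h with ⟨h1, h2, -⟩ | ⟨h1, h2, -⟩ <;> omega

private lemma compBipPlus_rank (r s t : ℕ) : (adjMatR (compBipPlus r s t)).rank ≤ 2 := by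
  classical
  apply rank_le_two_of_span (fun w : Fin (r + s + t) => if (w:ℕ) < r then (1:ℝ) else 0)
    (fun w : Fin (r + s + t) => if r ≤ (w:ℕ) ∧ (w:ℕ) < r + s then (1:ℝ) else 0)
  intro x
  refine Submodule.mem_span_pair.mpr
    ⟨(if r ≤ (x:ℕ) ∧ (x:ℕ) < r + s then (1:ℝ) else 0),
     (if (x:ℕ) < r then (1:ℝ) else 0), ?_⟩
  funext w
  simp only [Pi.add_apply, Pi.smul_apply, smul_eq_mul]
  by_cases h1 : (w:ℕ) < r <;> by_cases h2 : (x:ℕ) < r <;>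
    by_cases h3 : r ≤ (w:ℕ) ∧ (w:ℕ) < r + s <;> by_cases h4 : r ≤ (x:ℕ) ∧ (x:ℕ) < r + s <;>
    by_cases h5 : (compBipPlus r s t).Adj w x <;>
      rw [compBipPlus_adj] at h5 <;>
      first
        | (rw [adjMatR_of_adj (by rw [compBipPlus_adj]; exact h5)]
           simp only [if_pos, if_neg, h1, h2, h3, h4] <;> simp [h1, h2, h3, h4] <;> omega)
        | (rw [adjMatR_of_not_adj (by rw [compBipPlus_adj]; exact h5)]
           simp only [if_pos, if_neg, h1, h2, h3, h4] <;> simp [h1, h2, h3, h4] <;> omega)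

private lemma rank_eq_of_iso {n m : ℕ} {G : SimpleGraph (Fin n)} {H : SimpleGraph (Fin m)}
    (e : G ≃g H) : (adjMatR G).rank = (adjMatR H).rank := by
  have h : adjMatR G = (adjMatR H).submatrix e.toEquiv e.toEquiv := by
    ext u v
    rw [Matrix.submatrix_apply]
    by_cases hadj : G.Adj u v
    · have h2 : adjMatR H (e.toEquiv u) (e.toEquiv v) = 1 :=
        adjMatR_of_adj (e.map_adj_iff.mpr hadj)
      rw [adjMatR_of_adj hadj, h2]
    · have h2 : adjMatR H (e.toEquiv u) (e.toEquiv v) = 0 :=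
        adjMatR_of_not_adj (fun hc => hadj (e.map_adj_iff.mp hc))
      rw [adjMatR_of_not_adj hadj, h2]
  rw [h, Matrix.rank_submatrix]

end CompBip
section StructureAux
open Matrix

private lemma structure_of_rank_le_two {n : ℕ} {G : SimpleGraph (Fin n)}
    (hrank : (adjMatR G).rank ≤ 2) {u v : Fin n} (huv : G.Adj u v) :
    ∃ r s t : ℕ, 0 < r ∧ 0 < s ∧ Nonempty (G ≃g compBipPlus r s t) := by
  classical
  set col : Fin n → (Fin n → ℝ) := fun x w => adjMatR G w x with hcol
  -- linear independence of the two columns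
  have li : LinearIndependent ℝ ![col u, col v] := by
    rw [LinearIndependent.pair_iff]
    intro a b hab
    have e1 := congrFun hab v
    have e2 := congrFun hab u
    simp only [Pi.add_apply, Pi.smul_apply, smul_eq_mul, Pi.zero_apply, hcol] at e1 e2
    rw [adjMatR_of_adj huv.symm, adjMatR_of_not_adj (G.loopless.irrefl v)] at e1
    rw [adjMatR_of_adj huv, adjMatR_of_not_adj (G.loopless.irrefl u)] at e2
    constructor
    · linarith
    · linarith
  have hspan_le : Submodule.span ℝ ({col u, col v} : Set (Fin n → ℝ)) ≤
      LinearMap.range (adjMatR G).mulVecLin := by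
    rw [Submodule.span_le]
    intro y hy
    simp only [Set.mem_insert_iff, Set.mem_singleton_iff] at hy
    rcases hy with rfl | rfl
    · exact ⟨Pi.single u 1, by
        rw [Matrix.mulVecLin_apply, Matrix.mulVec_single]
        funext w; simp [hcol]⟩
    · exact ⟨Pi.single v 1, by
        rw [Matrix.mulVecLin_apply, Matrix.mulVec_single]
        funext w; simp [hcol]⟩
  have hfr : Module.finrank ℝ (Submodule.span ℝ ({col u, col v} : Set (Fin n → ℝ))) = 2 := by
    have h := finrank_span_eq_card li
    rw [Matrix.range_cons_cons_empty] at h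
    rw [h, Fintype.card_fin]
  have heq : Submodule.span ℝ ({col u, col v} : Set (Fin n → ℝ)) =
      LinearMap.range (adjMatR G).mulVecLin := by
    refine Submodule.eq_of_le_of_finrank_le hspan_le ?_
    rw [hfr]
    exact hrank
  have hmem : ∀ w, ∃ a b : ℝ, a • col u + b • col v = col w := by
    intro w
    have hw : col w ∈ LinearMap.range (adjMatR G).mulVecLin := ⟨Pi.single w 1, by
      rw [Matrix.mulVecLin_apply, Matrix.mulVec_single]
      funext z; simp [hcol]⟩
    rw [← heq] at hw
    exact Submodule.mem_span_pair.mp hw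
  -- key decomposition of each column
  have hkey : ∀ w, adjMatR G v w * adjMatR G u w = 0 ∧ col w = (adjMatR G v w) • col u + (adjMatR G u w) • col v := by
    intro w
    obtain ⟨a, b, hab⟩ := hmem w
    have e1 := congrFun hab v
    have e2 := congrFun hab u
    have e3 := congrFun hab w
    simp only [Pi.add_apply, Pi.smul_apply, smul_eq_mul, hcol] at e1 e2 e3
    rw [adjMatR_of_adj huv.symm, adjMatR_of_not_adj (G.loopless.irrefl v)] at e1
    rw [adjMatR_of_adj huv, adjMatR_of_not_adj (G.loopless.irrefl u)] at e2
    -- e1 : a * 1 + b * 0 = A v w,  e2 : a * 0 + b * 1 = A u w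
    have ha : a = adjMatR G v w := by linarith
    have hb : b = adjMatR G u w := by linarith
    rw [adjMatR_of_not_adj (G.loopless.irrefl w), adjMatR_symm G w u, adjMatR_symm G w v]
      at e3
    -- e3 : a * A u w + b * A v w = 0
    rw [ha, hb] at e3 hab
    constructor
    · have hnn1 : 0 ≤ adjMatR G v w := by rcases adjMatR_zero_or_one G v w with h | h <;> rw [h] <;> norm_num
      have hnn2 : 0 ≤ adjMatR G u w := by rcases adjMatR_zero_or_one G u w with h | h <;> rw [h] <;> norm_num
      nlinarith
    · exact hab.symm
  -- the partition predicates
  set Px : Fin n → Prop := fun w => G.Adj v w with hPx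
  set Py : Fin n → Prop := fun w => G.Adj u w with hPy
  have hdis : ∀ w, Px w → Py w → False := by
    intro w h1 h2
    have h3 := (hkey w).1
    rw [adjMatR_of_adj h1, adjMatR_of_adj h2] at h3
    norm_num at h3
  have hcolu : ∀ w, Px w → col w = col u := by
    intro w h1
    have h2 := (hkey w).2
    have hb : adjMatR G u w = 0 := by
      rcases adjMatR_zero_or_one G u w with h | h
      · exact h
      · exact absurd (adjMatR_adj_of_eq_one h) (fun hc => hdis w h1 hc)
    rw [adjMatR_of_adj h1, hb] at h2
    rw [h2]; funext z; simp
  have hcolv : ∀ w, Py w → col w = col v := by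
    intro w h1
    have h2 := (hkey w).2
    have hb : adjMatR G v w = 0 := by
      rcases adjMatR_zero_or_one G v w with h | h
      · exact h
      · exact absurd (adjMatR_adj_of_eq_one h) (fun hc => hdis w hc h1)
    rw [adjMatR_of_adj h1, hb] at h2
    rw [h2]; funext z; simp
  have hcol0 : ∀ w, ¬ Px w → ¬ Py w → col w = 0 := by
    intro w h1 h2
    have h3 := (hkey w).2
    rw [adjMatR_of_not_adj h1, adjMatR_of_not_adj h2] at h3
    rw [h3]; funext z; simp
  -- adjacency characterization
  have hchar : ∀ w w', G.Adj w w' ↔ ((Px w ∧ Py w') ∨ (Py w ∧ Px w')) := by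
    intro w w'
    constructor
    · intro h
      have hw : Px w ∨ Py w := by
        by_contra hc
        push_neg at hc
        have h4 := congrFun (hcol0 w hc.1 hc.2) w'
        simp only [hcol, Pi.zero_apply] at h4
        rw [adjMatR_of_adj h.symm] at h4
        norm_num at h4
      have hw' : Px w' ∨ Py w' := by
        by_contra hc
        push_neg at hc
        have h4 := congrFun (hcol0 w' hc.1 hc.2) w
        simp only [hcol, Pi.zero_apply] at h4
        rw [adjMatR_of_adj h] at h4
        norm_num at h4
      rcases hw with h1 | h1 <;> rcases hw' with h2 | h2
      · exfalso
        have h4 := congrFun (hcolu w' h2) w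
        simp only [hcol] at h4
        rw [adjMatR_of_adj h] at h4
        have h5 : G.Adj w u := adjMatR_adj_of_eq_one h4.symm
        exact hdis w h1 h5.symm
      · exact Or.inl ⟨h1, h2⟩
      · exact Or.inr ⟨h1, h2⟩
      · exfalso
        have h4 := congrFun (hcolv w' h2) w
        simp only [hcol] at h4
        rw [adjMatR_of_adj h] at h4
        have h5 : G.Adj w v := adjMatR_adj_of_eq_one h4.symm
        exact hdis w h5.symm h1
    · rintro (⟨h1, h2⟩ | ⟨h1, h2⟩)
      · have h4 := congrFun (hcolu w h1) w'
        simp only [hcol] at h4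
        rw [adjMatR_of_adj h2.symm] at h4
        exact (adjMatR_adj_of_eq_one h4).symm
      · have h4 := congrFun (hcolv w h1) w'
        simp only [hcol] at h4
        rw [adjMatR_of_adj h2.symm] at h4
        exact (adjMatR_adj_of_eq_one h4).symm
  have hPxu : Px u := huv.symm
  have hPyv : Py v := huv
  -- build the isomorphism
  refine ⟨Fintype.card {w // Px w}, Fintype.card {w // Py w},
    Fintype.card {w // ¬ Px w ∧ ¬ Py w},
    Fintype.card_pos_iff.mpr ⟨⟨u, hPxu⟩⟩, Fintype.card_pos_iff.mpr ⟨⟨v, hPyv⟩⟩, ?_⟩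
  set r := Fintype.card {w // Px w} with hr
  set s := Fintype.card {w // Py w} with hs
  set t := Fintype.card {w // ¬ Px w ∧ ¬ Py w} with ht
  let eX : {w // Px w} ≃ Fin r := Fintype.equivFinOfCardEq rfl
  let eY : {w // Py w} ≃ Fin s := Fintype.equivFinOfCardEq rfl
  let eZ : {w // ¬ Px w ∧ ¬ Py w} ≃ Fin t := Fintype.equivFinOfCardEq rfl
  let eY' : {w : {x : Fin n // ¬ Px x} // Py w.1} ≃ {w // Py w} :=
    (Equiv.subtypeSubtypeEquivSubtypeInter (fun w => ¬ Px w) Py).trans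
      (Equiv.subtypeEquivRight fun w =>
        ⟨fun h => h.2, fun h => ⟨fun hx => hdis w hx h, h⟩⟩)
  let eZ' : {w : {x : Fin n // ¬ Px x} // ¬ Py w.1} ≃ {w // ¬ Px w ∧ ¬ Py w} :=
    Equiv.subtypeSubtypeEquivSubtypeInter (fun w => ¬ Px w) (fun w => ¬ Py w)
  let e0 : Fin n ≃ (Fin r ⊕ (Fin s ⊕ Fin t)) :=
    (Equiv.sumCompl Px).symm.trans
      (Equiv.sumCongr eX
        ((Equiv.sumCompl fun w : {x : Fin n // ¬ Px x} => Py w.1).symm.trans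
          (Equiv.sumCongr (eY'.trans eY) (eZ'.trans eZ))))
  let F : (Fin r ⊕ (Fin s ⊕ Fin t)) ≃ Fin (r + s + t) :=
    (Equiv.sumAssoc (Fin r) (Fin s) (Fin t)).symm.trans
      ((Equiv.sumCongr finSumFinEquiv (Equiv.refl (Fin t))).trans finSumFinEquiv)
  have hF1 : ∀ i : Fin r, ((F (Sum.inl i) : Fin (r + s + t)) : ℕ) = (i : ℕ) := by
    intro i
    simp [F, Equiv.sumAssoc, finSumFinEquiv_apply_left]
  have hF2 : ∀ j : Fin s, ((F (Sum.inr (Sum.inl j)) : Fin (r + s + t)) : ℕ) = r + (j : ℕ) := by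
    intro j
    simp [F, Equiv.sumAssoc, finSumFinEquiv_apply_left, finSumFinEquiv_apply_right]
  have hF3 : ∀ k : Fin t, ((F (Sum.inr (Sum.inr k)) : Fin (r + s + t)) : ℕ) = r + s + (k : ℕ) := by
    intro k
    simp [F, Equiv.sumAssoc, finSumFinEquiv_apply_right]
  let e : Fin n ≃ Fin (r + s + t) := e0.trans F
  have hclsX : ∀ w (h : Px w), (e w : ℕ) < r := by
    intro w h
    have h1 : e0 w = Sum.inl (eX ⟨w, h⟩) := by
      simp [e0, Equiv.sumCompl_symm_apply_of_pos (p := Px) h]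
    have h2 : e w = F (Sum.inl (eX ⟨w, h⟩)) := by
      simp only [e, Equiv.trans_apply, h1]
    rw [h2, hF1]
    exact (eX ⟨w, h⟩).isLt
  have hclsY : ∀ w (h : Py w), r ≤ (e w : ℕ) ∧ (e w : ℕ) < r + s := by
    intro w h
    have hnx : ¬ Px w := fun hx => hdis w hx h
    have h1 : e0 w = Sum.inr (Sum.inl (eY (eY' ⟨⟨w, hnx⟩, h⟩))) := by
      simp [e0, Equiv.sumCompl_symm_apply_of_neg (p := Px) hnx,
        Equiv.sumCompl_symm_apply_of_pos (p := fun w : {x : Fin n // ¬ Px x} => Py w.1) (a := ⟨w, hnx⟩) h]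
    have h2 : e w = F (Sum.inr (Sum.inl (eY (eY' ⟨⟨w, hnx⟩, h⟩)))) := by
      simp only [e, Equiv.trans_apply, h1]
    rw [h2, hF2]
    have := (eY (eY' ⟨⟨w, hnx⟩, h⟩)).isLt
    omega
  have hclsZ : ∀ w (h1 : ¬ Px w) (h2 : ¬ Py w), r + s ≤ (e w : ℕ) := by
    intro w hx hy
    have h1 : e0 w = Sum.inr (Sum.inr (eZ (eZ' ⟨⟨w, hx⟩, hy⟩))) := by
      simp [e0, Equiv.sumCompl_symm_apply_of_neg (p := Px) hx,
        Equiv.sumCompl_symm_apply_of_neg (p := fun w : {x : Fin n // ¬ Px x} => Py w.1) (a := ⟨w, hx⟩) hy]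
    have h2 : e w = F (Sum.inr (Sum.inr (eZ (eZ' ⟨⟨w, hx⟩, hy⟩)))) := by
      simp only [e, Equiv.trans_apply, h1]
    rw [h2, hF3]
    omega
  have hiffX : ∀ w, (e w : ℕ) < r ↔ Px w := by
    intro w
    refine ⟨fun h => ?_, hclsX w⟩
    by_contra hx
    by_cases hy : Py w
    · have := hclsY w hy; omega
    · have := hclsZ w hx hy; omega
  have hiffY : ∀ w, (r ≤ (e w : ℕ) ∧ (e w : ℕ) < r + s) ↔ Py w := by
    intro w
    refine ⟨fun h => ?_, hclsY w⟩
    by_cases hx : Px w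
    · have := hclsX w hx; omega
    · by_contra hy
      have := hclsZ w hx hy; omega
  refine ⟨⟨e, ?_⟩⟩
  intro a b
  rw [compBipPlus_adj, hchar]
  constructor
  · rintro (⟨h1, h2, h3⟩ | ⟨h1, h2, h3⟩)
    · exact Or.inl ⟨(hiffX a).1 h1, (hiffY b).1 ⟨h2, h3⟩⟩
    · exact Or.inr ⟨(hiffY a).1 ⟨h2, h3⟩, (hiffX b).1 h1⟩
  · rintro (⟨h1, h2⟩ | ⟨h1, h2⟩)
    · exact Or.inl ⟨(hiffX a).2 h1, ((hiffY b).2 h2).1, ((hiffY b).2 h2).2⟩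
    · exact Or.inr ⟨(hiffX b).2 h2, ((hiffY a).2 h1).1, ((hiffY a).2 h1).2⟩

end StructureAux
theorem energy_eq_two_sqrt_iff (n : ℕ) (G : SimpleGraph (Fin n)) (hm : 1 ≤ numEdges G) :
    energy G = 2 * Real.sqrt (numEdges G) ↔
      ∃ r s t : ℕ, 0 < r ∧ 0 < s ∧ Nonempty (G ≃g compBipPlus r s t) := by
  constructor
  · intro hE
    have hrank : (adjMatR G).rank ≤ 2 := (energy_iff_rank G).mp hE
    have hpos : 0 < G.edgeSet.ncard := hm
    have hne : G.edgeSet.Nonempty := (Set.ncard_pos (G.edgeSet.toFinite)).mp hpos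
    obtain ⟨ed, hed⟩ := hne
    have hedge : ∃ u v, G.Adj u v := by
      revert hed
      refine Sym2.ind ?_ ed
      intro u v h
      exact ⟨u, v, G.mem_edgeSet.mp h⟩
    obtain ⟨u, v, huv⟩ := hedge
    exact structure_of_rank_le_two hrank huv
  · rintro ⟨r, s, t, -, -, ⟨e⟩⟩
    have hrank : (adjMatR G).rank ≤ 2 := by
      rw [rank_eq_of_iso e]
      exact compBipPlus_rank r s t
    exact (energy_iff_rank G).mpr hrank
end

section
/- There is no graph G without isolated vertices whose second largest adjacency eigenvalue satisfies −1 < λ_2(G) < 0. -/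
open SimpleGraph Finset

section Helpers

open Matrix

namespace NoSecondEig

section QF
variable {n : ℕ} {A : Matrix (Fin n) (Fin n) ℝ} (hA : A.IsHermitian)

noncomputable def coordMap (hA : A.IsHermitian) (z : Fin n → ℝ) : Fin n → ℝ :=
  star (hA.eigenvectorUnitary : Matrix (Fin n) (Fin n) ℝ) *ᵥ z

lemma quadform_eq_sum (z : Fin n → ℝ) :
    z ⬝ᵥ (A *ᵥ z) = ∑ i, hA.eigenvalues i * (coordMap hA z i)^2 := by
  set U := (hA.eigenvectorUnitary : Matrix (Fin n) (Fin n) ℝ) with hU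
  conv_lhs => rw [hA.spectral_theorem, Unitary.conjStarAlgAut_apply]
  rw [← mulVec_mulVec, ← mulVec_mulVec, dotProduct_mulVec, ← mulVec_transpose]
  have hstar : Uᵀ = star U := by
    ext i j
    simp [Matrix.star_eq_conjTranspose, Matrix.conjTranspose_apply]
  rw [hstar]
  simp only [coordMap, mulVec_diagonal, dotProduct, Function.comp, ← hU]
  exact Finset.sum_congr rfl fun i _ => by simp [mulVec_diagonal]; ring

lemma coordMap_add (x y : Fin n → ℝ) : coordMap hA (x + y) = coordMap hA x + coordMap hA y := by
  simp [coordMap, mulVec_add]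

lemma coordMap_smul (s : ℝ) (x : Fin n → ℝ) : coordMap hA (s • x) = s • coordMap hA x := by
  simp [coordMap, mulVec_smul]

lemma coordMap_eq_zero {z : Fin n → ℝ} (hz : coordMap hA z = 0) : z = 0 := by
  have h1 : (hA.eigenvectorUnitary : Matrix (Fin n) (Fin n) ℝ) *ᵥ (coordMap hA z) = z := by
    rw [coordMap, mulVec_mulVec,
      (Matrix.mem_unitaryGroup_iff).mp hA.eigenvectorUnitary.2, one_mulVec]
  rw [hz, mulVec_zero] at h1
  exact h1.symm

lemma quadform_neg {z : Fin n → ℝ} (hz : z ≠ 0)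
    (hcoord : ∀ i, 0 ≤ hA.eigenvalues i → coordMap hA z i = 0) :
    z ⬝ᵥ (A *ᵥ z) < 0 := by
  rw [quadform_eq_sum hA]
  have hw : coordMap hA z ≠ 0 := fun h => hz (coordMap_eq_zero hA h)
  obtain ⟨i₀, hi₀⟩ := Function.ne_iff.mp hw
  have hneg : hA.eigenvalues i₀ < 0 := by
    by_contra hge
    exact hi₀ (hcoord i₀ (le_of_not_gt hge))
  have hterm : ∀ i ∈ Finset.univ, hA.eigenvalues i * (coordMap hA z i)^2 ≤ 0 := by
    intro i _
    rcases lt_or_ge (hA.eigenvalues i) 0 with hlt | hle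
    · exact mul_nonpos_of_nonpos_of_nonneg hlt.le (sq_nonneg _)
    · simp [hcoord i hle]
  calc ∑ i, hA.eigenvalues i * (coordMap hA z i)^2
      ≤ hA.eigenvalues i₀ * (coordMap hA z i₀)^2 := by
        rw [← Finset.add_sum_erase _ _ (Finset.mem_univ i₀)]
        have : ∑ i ∈ Finset.univ.erase i₀, hA.eigenvalues i * (coordMap hA z i)^2 ≤ 0 :=
          Finset.sum_nonpos fun i _ => hterm i (Finset.mem_univ i)
        linarith
    _ < 0 := mul_neg_of_neg_of_pos hneg
        (lt_of_le_of_ne (sq_nonneg _) (Ne.symm (pow_ne_zero 2 hi₀)))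

/-- A "2-dimensional nonnegative subspace" forces at least 2 nonnegative eigenvalues. -/
lemma two_nonneg_eigenvalues (x y : Fin n → ℝ)
    (hx : 0 ≤ x ⬝ᵥ (A *ᵥ x)) (hy : 0 ≤ y ⬝ᵥ (A *ᵥ y))
    (hxy : x ⬝ᵥ (A *ᵥ y) = 0) (hyx : y ⬝ᵥ (A *ᵥ x) = 0)
    (hind : ∀ s t : ℝ, ¬(s = 0 ∧ t = 0) → s • x + t • y ≠ 0) :
    2 ≤ (Finset.univ.filter fun i => 0 ≤ hA.eigenvalues i).card := by
  by_contra hcard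
  push_neg at hcard
  have hcard1 : (Finset.univ.filter fun i => 0 ≤ hA.eigenvalues i).card ≤ 1 := by omega
  have hexpand : ∀ s t : ℝ, (s • x + t • y) ⬝ᵥ (A *ᵥ (s • x + t • y)) =
      s^2 * (x ⬝ᵥ (A *ᵥ x)) + t^2 * (y ⬝ᵥ (A *ᵥ y)) := by
    intro s t
    simp only [mulVec_add, mulVec_smul, dotProduct_add, dotProduct_smul, add_dotProduct,
      smul_dotProduct, smul_eq_mul, hxy, hyx]
    ring
  obtain ⟨s, t, hst, hvan⟩ : ∃ s t : ℝ, ¬(s = 0 ∧ t = 0) ∧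
      ∀ i, 0 ≤ hA.eigenvalues i → coordMap hA (s • x + t • y) i = 0 := by
    rcases isEmpty_or_nonempty (Fin n) with he | he
    · exact absurd (Subsingleton.elim ((1:ℝ) • x + (0:ℝ) • y) 0) (hind 1 0 (by simp))
    set S := Finset.univ.filter fun i => 0 ≤ hA.eigenvalues i with hS
    rcases Finset.card_le_one_iff_subset_singleton.mp hcard1 with ⟨i₀, hsub⟩
    by_cases h0 : coordMap hA x i₀ = 0 ∧ coordMap hA y i₀ = 0
    · refine ⟨1, 0, by simp, fun i hi => ?_⟩
      have hiS : i ∈ S := by simp [hS, hi]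
      have : i = i₀ := by simpa using hsub hiS
      subst this
      simp [coordMap_add, coordMap_smul, h0.1, h0.2]
    · refine ⟨coordMap hA y i₀, -(coordMap hA x i₀), ?_, fun i hi => ?_⟩
      · rintro ⟨h1, h2⟩
        exact h0 ⟨by simpa using h2, h1⟩
      · have hiS : i ∈ S := by simp [hS, hi]
        have : i = i₀ := by simpa using hsub hiS
        subst this
        simp only [coordMap_add, coordMap_smul, Pi.add_apply, Pi.smul_apply, smul_eq_mul]
        ring
  have hz := hind s t hst
  have hneg := quadform_neg hA hz hvan
  rw [hexpand] at hneg
  nlinarith [sq_nonneg s, sq_nonneg t]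

end QF

lemma adjMatR_apply {n : ℕ} (G : SimpleGraph (Fin n)) [DecidableRel G.Adj] (a b : Fin n) :
    adjMatR G a b = if G.Adj a b then (1:ℝ) else 0 := by
  by_cases h : G.Adj a b <;> unfold adjMatR <;> simp [h]

lemma specMS_card {n : ℕ} (G : SimpleGraph (Fin n)) : Multiset.card (specMS G) = n := by
  simp [specMS]

lemma eigval_mem {n : ℕ} (G : SimpleGraph (Fin n)) (i : ℕ) (hi : i < n) :
    ∃ j : Fin n, (adjMatR_isHermitian G).eigenvalues j = eigval G i := by
  have hlen : ((specMS G).sort (· ≥ ·)).length = n := by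
    rw [Multiset.length_sort, specMS_card]
  have hmem : eigval G i ∈ (specMS G).sort (· ≥ ·) := by
    rw [eigval, List.getD_eq_getElem _ _ (by omega)]
    exact List.getElem_mem _
  rw [Multiset.mem_sort] at hmem
  simpa [specMS, List.mem_ofFn, eq_comm] using hmem

lemma sorted_aux : ∀ (l : List ℝ), l.Pairwise (· ≥ ·) → 2 ≤ l.length → l.getD 1 0 < 0 →
    (l.filter fun x => 0 ≤ x).length ≤ 1
  | a :: b :: rest, hsorted, _, h2 => by
    have hb : b < 0 := by simpa using h2
    have hrest : ∀ x ∈ b :: rest, x < 0 := by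
      intro x hx
      rcases List.mem_cons.mp hx with rfl | hx
      · exact hb
      · have := (List.pairwise_cons.mp (List.pairwise_cons.mp hsorted).2).1 x hx
        linarith
    have hnil : ((b :: rest).filter fun x => 0 ≤ x) = [] := by
      rw [List.filter_eq_nil_iff]
      intro x hx
      simpa using not_le.mpr (hrest x hx)
    rcases le_or_gt 0 a with ha | ha
    · simp [List.filter_cons, ha, hnil]
    · simp [List.filter_cons, not_le.mpr ha, hnil]

lemma nonneg_count_le_one {n : ℕ} (G : SimpleGraph (Fin n)) (hn : 2 ≤ n)
    (h2 : eigval G 1 < 0) :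
    (Finset.univ.filter fun i => 0 ≤ (adjMatR_isHermitian G).eigenvalues i).card ≤ 1 := by
  classical
  set l := (specMS G).sort (· ≥ ·) with hl
  have hlen : l.length = n := by rw [hl, Multiset.length_sort, specMS_card]
  have hsorted : l.Pairwise (· ≥ ·) := Multiset.pairwise_sort _ _
  have hcount : (Finset.univ.filter fun i => 0 ≤ (adjMatR_isHermitian G).eigenvalues i).card
      = (l.filter fun x => 0 ≤ x).length := by
    have h1 : (l : Multiset ℝ) = specMS G := Multiset.sort_eq _ _
    calc (Finset.univ.filter fun i => 0 ≤ (adjMatR_isHermitian G).eigenvalues i).card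
        = Multiset.card (Multiset.filter (fun x => 0 ≤ x)
            (Multiset.map (adjMatR_isHermitian G).eigenvalues Finset.univ.val)) := by
          rw [Multiset.filter_map, Multiset.card_map]
          rfl
      _ = Multiset.card (Multiset.filter (fun x => 0 ≤ x) (l : Multiset ℝ)) := by
          rw [h1]; rfl
      _ = (l.filter fun x => 0 ≤ x).length := by
          simp [Multiset.filter_coe]
  rw [hcount]
  exact sorted_aux l hsorted (by omega) (by simpa [eigval, hl] using h2)

lemma complete_eig {n : ℕ} (G : SimpleGraph (Fin n)) (hA : (adjMatR G).IsHermitian)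
    (hcomp : ∀ u v : Fin n, u ≠ v → G.Adj u v) (μ : ℝ) (i : Fin n)
    (hi : hA.eigenvalues i = μ) : μ = -1 ∨ μ = (n : ℝ) - 1 := by
  classical
  set f : Fin n → ℝ := ⇑(hA.eigenvectorBasis i) with hf
  have heig : adjMatR G *ᵥ f = μ • f := by
    rw [hf, hA.mulVec_eigenvectorBasis, hi]
  have hfne : ∃ a, f a ≠ 0 := by
    by_contra hcon
    push_neg at hcon
    have h1 := hA.eigenvectorBasis.orthonormal.1 i
    rw [show hA.eigenvectorBasis i = 0 from PiLp.ext fun a => hcon a] at h1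
    simp at h1
  set s : ℝ := ∑ k, f k with hs
  have key : ∀ a, μ * f a = s - f a := by
    intro a
    have h1 : (adjMatR G *ᵥ f) a = μ * f a := by rw [heig]; simp
    rw [← h1, mulVec, dotProduct]
    have h2 : ∀ k, adjMatR G a k * f k = if k ≠ a then f k else 0 := by
      intro k
      rw [adjMatR_apply]
      by_cases hk : k = a
      · simp [hk, G.irrefl]
      · simp [hk, hcomp a k (Ne.symm hk)]
    rw [Finset.sum_congr rfl fun k _ => h2 k, Finset.sum_ite, Finset.sum_const_zero, add_zero,
      Finset.filter_ne', Finset.sum_erase_eq_sub (Finset.mem_univ a), hs]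
  by_cases hmu : μ = -1
  · exact Or.inl hmu
  · right
    have hne : μ + 1 ≠ 0 := fun hz => hmu (by linarith)
    obtain ⟨a, ha⟩ := hfne
    set c := f a with hc
    have hall : ∀ b, f b = c := by
      intro b
      have h1 := key a
      have h2 := key b
      have h3 : (μ + 1) * (f b - c) = 0 := by linear_combination h2 - h1
      rcases mul_eq_zero.mp h3 with hcase | hcase
      · exact absurd hcase hne
      · linarith
    have hsum : s = n * c := by
      rw [hs, Finset.sum_congr rfl fun k _ => hall k, Finset.sum_const, Finset.card_univ,
        Fintype.card_fin, nsmul_eq_mul]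
    have h3 : (μ - ((n:ℝ) - 1)) * c = 0 := by linear_combination key a + hsum
    rcases mul_eq_zero.mp h3 with hcase | hcase
    · linarith
    · exact absurd hcase ha

lemma p3_two_nonneg {n : ℕ} (G : SimpleGraph (Fin n)) (a b c : Fin n)
    (hab : G.Adj a b) (hbc : G.Adj b c) (hac : ¬ G.Adj a c) (hacne : a ≠ c) :
    2 ≤ (Finset.univ.filter fun i => 0 ≤ (adjMatR_isHermitian G).eigenvalues i).card := by
  classical
  set A := adjMatR G with hA
  have hba := hab.symm
  have hcb := hbc.symm
  have hca : ¬ G.Adj c a := fun hadj => hac hadj.symm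
  have habne : a ≠ b := hab.ne
  have hbcne : b ≠ c := hbc.ne
  set x : Fin n → ℝ := Pi.single a 1 - Pi.single c 1 with hx
  set y : Fin n → ℝ := Pi.single a 1 + Pi.single c 1 + Real.sqrt 2 • (Pi.single b 1 : Fin n → ℝ)
    with hy
  have entry : ∀ u v : Fin n, A u v = if G.Adj u v then (1:ℝ) else 0 := adjMatR_apply G
  apply two_nonneg_eigenvalues (adjMatR_isHermitian G) x y
  · rw [← hA]
    simp [hx, mulVec_add, mulVec_smul, mulVec_single, sub_eq_add_neg, mulVec_neg,
      dotProduct_add, dotProduct_neg, add_dotProduct, neg_dotProduct, smul_dotProduct,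
      single_dotProduct, entry, hab, hbc, hac, hca, hba, hcb, G.irrefl]
  · rw [← hA]
    simp [hy, mulVec_add, mulVec_smul, mulVec_single, dotProduct_add, add_dotProduct,
      smul_dotProduct, dotProduct_smul, single_dotProduct, entry, hab, hbc, hac, hca, hba,
      hcb, G.irrefl]
    positivity
  · rw [← hA]
    simp [hx, hy, mulVec_add, mulVec_smul, mulVec_single, sub_eq_add_neg, mulVec_neg,
      dotProduct_add, dotProduct_neg, add_dotProduct, neg_dotProduct, smul_dotProduct,
      dotProduct_smul, single_dotProduct, entry, hab, hbc, hac, hca, hba, hcb, G.irrefl]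
  · rw [← hA]
    simp [hx, hy, mulVec_add, mulVec_smul, mulVec_single, sub_eq_add_neg, mulVec_neg,
      dotProduct_add, dotProduct_neg, add_dotProduct, neg_dotProduct, smul_dotProduct,
      dotProduct_smul, single_dotProduct, entry, hab, hbc, hac, hca, hba, hcb, G.irrefl]
  · intro s t hst heq
    by_cases ht : t = 0
    · have hs : s ≠ 0 := fun hz => hst ⟨hz, ht⟩
      have := congrFun heq a
      simp [hx, hy, ht, Pi.single_eq_of_ne (Ne.symm habne), Pi.single_eq_of_ne hacne,
        Pi.single_eq_of_ne (Ne.symm hacne)] at this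
      exact hs this
    · have := congrFun heq b
      simp [hx, hy, Pi.single_eq_of_ne habne, Pi.single_eq_of_ne (Ne.symm habne),
        Pi.single_eq_of_ne hbcne, Pi.single_eq_of_ne (Ne.symm hbcne)] at this
      exact ht this

lemma k2k2_two_nonneg {n : ℕ} (G : SimpleGraph (Fin n)) (a b c d : Fin n)
    (hab : G.Adj a b) (hcd : G.Adj c d)
    (hnac : ¬ G.Adj a c) (hnad : ¬ G.Adj a d) (hnbc : ¬ G.Adj b c) (hnbd : ¬ G.Adj b d)
    (hac : a ≠ c) (had : a ≠ d) (hbc : b ≠ c) (hbd : b ≠ d) :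
    2 ≤ (Finset.univ.filter fun i => 0 ≤ (adjMatR_isHermitian G).eigenvalues i).card := by
  classical
  set A := adjMatR G with hA
  have hba := hab.symm
  have hdc := hcd.symm
  have hnca : ¬ G.Adj c a := fun hadj => hnac hadj.symm
  have hnda : ¬ G.Adj d a := fun hadj => hnad hadj.symm
  have hncb : ¬ G.Adj c b := fun hadj => hnbc hadj.symm
  have hndb : ¬ G.Adj d b := fun hadj => hnbd hadj.symm
  set x : Fin n → ℝ := Pi.single a 1 + Pi.single b 1 with hx
  set y : Fin n → ℝ := Pi.single c 1 + Pi.single d 1 with hy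
  have entry : ∀ u v : Fin n, A u v = if G.Adj u v then (1:ℝ) else 0 := adjMatR_apply G
  apply two_nonneg_eigenvalues (adjMatR_isHermitian G) x y
  · rw [← hA]
    simp [hx, mulVec_add, mulVec_single, dotProduct_add, add_dotProduct,
      single_dotProduct, entry, hab, hba, G.irrefl]
  · rw [← hA]
    simp [hy, mulVec_add, mulVec_single, dotProduct_add, add_dotProduct,
      single_dotProduct, entry, hcd, hdc, G.irrefl]
  · rw [← hA]
    simp [hx, hy, mulVec_add, mulVec_single, dotProduct_add, add_dotProduct,
      single_dotProduct, entry, hnac, hnad, hnbc, hnbd]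
  · rw [← hA]
    simp [hx, hy, mulVec_add, mulVec_single, dotProduct_add, add_dotProduct,
      single_dotProduct, entry, hnca, hnda, hncb, hndb]
  · intro s t hst heq
    by_cases hsz : s = 0
    · have htz : t ≠ 0 := fun hz => hst ⟨hsz, hz⟩
      have := congrFun heq c
      simp [hx, hy, hsz, Pi.single_eq_of_ne (Ne.symm hac), Pi.single_eq_of_ne (Ne.symm hbc),
        Pi.single_eq_of_ne hcd.ne] at this
      exact htz this
    · have := congrFun heq a
      simp [hx, hy, Pi.single_eq_of_ne hab.ne, Pi.single_eq_of_ne hac,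
        Pi.single_eq_of_ne had] at this
      exact hsz this

end NoSecondEig

end Helpers

theorem no_secondEig_in_Ioo (n : ℕ) (hn : 2 ≤ n) (G : SimpleGraph (Fin n))
    (h : ∀ v, ∃ w, G.Adj v w) :
    ¬ (-1 < eigval G 1 ∧ eigval G 1 < 0) := by
  classical
  rintro ⟨h1, h2⟩
  by_cases hcomp : ∀ u v : Fin n, u ≠ v → G.Adj u v
  · obtain ⟨i, hi⟩ := NoSecondEig.eigval_mem G 1 (by omega)
    rcases NoSecondEig.complete_eig G (adjMatR_isHermitian G) hcomp (eigval G 1) i hi with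
      hc | hc
    · linarith
    · have hge : (2:ℝ) ≤ (n:ℝ) := by exact_mod_cast hn
      rw [hc] at h2
      linarith
  · push_neg at hcomp
    obtain ⟨u, v, huv, hnadj⟩ := hcomp
    obtain ⟨u', hu'⟩ := h u
    obtain ⟨v', hv'⟩ := h v
    have hle := NoSecondEig.nonneg_count_le_one G hn h2
    have hnvu : ¬ G.Adj v u := fun hadj => hnadj hadj.symm
    have hge : 2 ≤ (Finset.univ.filter
        fun i => 0 ≤ (adjMatR_isHermitian G).eigenvalues i).card := by
      by_cases hc1 : G.Adj u' v
      · exact NoSecondEig.p3_two_nonneg G u u' v hu' hc1 hnadj huv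
      · by_cases hc2 : G.Adj v' u
        · exact NoSecondEig.p3_two_nonneg G v v' u hv' hc2 hnvu (Ne.symm huv)
        · by_cases hc3 : u' = v'
          · subst hc3
            exact NoSecondEig.p3_two_nonneg G u u' v hu' hv'.symm hnadj huv
          · have hnu'v : ¬ G.Adj u' v := hc1
            have hnuv' : ¬ G.Adj u v' := fun hadj => hc2 hadj.symm
            by_cases hc4 : G.Adj u' v'
            · have huv' : u ≠ v' := by
                rintro rfl
                exact hnvu hv'
              exact NoSecondEig.p3_two_nonneg G u u' v' hu' hc4 hnuv' huv'
            · have huv'ne : u ≠ v' := by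
                rintro rfl
                exact hnvu hv'
              have hu'vne : u' ≠ v := by
                rintro rfl
                exact hnadj hu'
              exact NoSecondEig.k2k2_two_nonneg G u u' v v' hu' hv'
                hnadj hnuv' hnu'v hc4 huv huv'ne hu'vne hc3
    omega
end
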